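/- Let A be a complex abelian surface, n a positive integer, and λ = (λ₁,…,λ_ℓ) a partition of n with e(λ) = gcd(λ₁,…,λ_ℓ). Let s : A^ℓ → A be the homomorphism s(x₁,…,x_ℓ) = Σᵢ λᵢ xᵢ. Then the kernel K^λ = Ker(s) has exactly e(λ)⁴ connected components. -/

import Mathlib

open Finset

/-- Bézout over a finset of naturals. -/
lemma bezout_finset {ι : Type*} [DecidableEq ι] (s : Finset ι) (f : ι → ℕ) :
    ∃ c : ι → ℤ, ∑ i ∈ s, c i * (f i : ℤ) = ((s.gcd f : ℕ) : ℤ) := by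
  classical
  induction s using Finset.induction with
  | empty => exact ⟨0, by simp⟩
  | @insert a s ha ih =>
    obtain ⟨c, hc⟩ := ih
    refine ⟨Function.update (fun i => Nat.gcdB (f a) (s.gcd f) * c i) a
      (Nat.gcdA (f a) (s.gcd f)), ?_⟩
    rw [Finset.sum_insert ha, Function.update_self, Finset.gcd_insert]
    have h1 : ∑ i ∈ s, Function.update (fun i => Nat.gcdB (f a) (s.gcd f) * c i) a
        (Nat.gcdA (f a) (s.gcd f)) i * (f i : ℤ)
        = Nat.gcdB (f a) (s.gcd f) * ∑ i ∈ s, c i * (f i : ℤ) := by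
      rw [Finset.mul_sum]
      refine Finset.sum_congr rfl fun i hi => ?_
      rw [Function.update_of_ne (by rintro rfl; exact ha hi), mul_assoc]
    rw [h1, hc]
    have h2 : GCDMonoid.gcd (f a) (s.gcd f) = Nat.gcd (f a) (s.gcd f) := rfl
    rw [h2, Nat.gcd_eq_gcd_ab]
    ring

/-- Let `A` be a complex abelian surface (modelled as a compact connected
Hausdorff topological abelian group whose `m`-torsion has exactly `m ^ 4` elements for all
`m > 0`), `n` a positive integer and `l = (λ₁, …, λ_ℓ)` a partition of `n` with
`e = gcd (λ₁, …, λ_ℓ)`.  Let `s : A^ℓ → A` be the homomorphism `s x = ∑ i, λᵢ • xᵢ`.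
Then the kernel `K^λ = ker s` has exactly `e ^ 4` connected components. -/
theorem kernel_connectedComponents_card
    {A : Type*} [AddCommGroup A] [TopologicalSpace A] [IsTopologicalAddGroup A]
    [T2Space A] [CompactSpace A] [ConnectedSpace A]
    (htors : ∀ m : ℕ, 0 < m → Nat.card {a : A // m • a = 0} = m ^ 4)
    (n ℓ : ℕ) (hn : 0 < n) (hℓ : 0 < ℓ)
    (l : Fin ℓ → ℕ) (hpos : ∀ i, 0 < l i) (hanti : Antitone l)
    (hsum : ∑ i, l i = n)
    (e : ℕ) (he : e = Finset.univ.gcd l) :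
    Nat.card (ConnectedComponents {x : Fin ℓ → A // ∑ i, l i • x i = 0}) = e ^ 4 := by
  classical
  -- e is positive
  have he0 : 0 < e := by
    rw [he]
    rcases Nat.eq_zero_or_pos (Finset.univ.gcd l) with h0 | h
    · exact absurd (Finset.gcd_eq_zero_iff.mp h0 ⟨0, hℓ⟩ (Finset.mem_univ _))
        (hpos ⟨0, hℓ⟩).ne'
    · exact h
  have hdvd : ∀ i, e ∣ l i := fun i => he ▸ Finset.gcd_dvd (Finset.mem_univ i)
  set μ : Fin ℓ → ℕ := fun i => l i / e with hμdef
  have hμ : ∀ i, l i = e * μ i := fun i => (Nat.mul_div_cancel' (hdvd i)).symm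
  -- Bézout coefficients
  obtain ⟨c, hc⟩ := bezout_finset (Finset.univ : Finset (Fin ℓ)) l
  rw [← he] at hc
  have hstep : ∑ i, c i * (l i : ℤ) = (e : ℤ) * ∑ i, c i * (μ i : ℤ) := by
    rw [Finset.mul_sum]
    refine Finset.sum_congr rfl fun i _ => ?_
    rw [hμ i]; push_cast; ring
  have hc1 : ∑ i, c i * (μ i : ℤ) = 1 :=
    mul_left_cancel₀ (show (e : ℤ) ≠ 0 by exact_mod_cast he0.ne')
      (by rw [← hstep, hc, mul_one])
  -- the auxiliary homomorphism t
  set t : (Fin ℓ → A) → A := fun x => ∑ i, μ i • x i with htdef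
  have htc : Continuous t := by
    apply continuous_finset_sum
    intro i _
    exact (continuous_apply i).const_smul (μ i)
  have hts : ∀ x : Fin ℓ → A, ∑ i, l i • x i = e • t x := by
    intro x
    rw [htdef]
    simp only
    rw [Finset.smul_sum]
    exact Finset.sum_congr rfl fun i _ => by rw [hμ i, mul_smul]
  have ht_add : ∀ x y : Fin ℓ → A, t (x + y) = t x + t y := by
    intro x y; simp [htdef, smul_add, Finset.sum_add_distrib]
  have ht_sub : ∀ x y : Fin ℓ → A, t (x - y) = t x - t y := by
    intro x y; simp [htdef, smul_sub, Finset.sum_sub_distrib]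
  have ht_zero : t 0 = 0 := by simp [htdef]
  -- the section σ
  set σ : A → (Fin ℓ → A) := fun a i => c i • a with hσdef
  have hσc : Continuous σ := continuous_pi fun i => continuous_id.zsmul (c i)
  have hσ0 : σ (0 : A) = 0 := by funext i; simp [hσdef]
  have htσ : ∀ a : A, t (σ a) = a := by
    intro a
    rw [htdef, hσdef]
    simp only
    have h : ∀ i : Fin ℓ, μ i • c i • a = (c i * (μ i : ℤ)) • a := by
      intro i
      rw [← natCast_zsmul (c i • a) (μ i), smul_smul, mul_comm]
    rw [Finset.sum_congr rfl fun i _ => h i, ← Finset.sum_smul, hc1, one_smul]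
  -- the kernel and the torsion group
  set K := {x : Fin ℓ → A // ∑ i, l i • x i = 0} with hKdef
  set T := {a : A // e • a = 0} with hTdef
  haveI : Finite T := Nat.finite_of_card_ne_zero (by rw [hTdef, htors e he0]; positivity)
  -- the map f : K → T
  have hmemT : ∀ x : K, e • t x.1 = 0 := fun x => by rw [← hts]; exact x.2
  set f : K → T := fun x => ⟨t x.1, hmemT x⟩ with hfdef
  have hfc : Continuous f := (htc.comp continuous_subtype_val).subtype_mk _
  -- the map g : T → ConnectedComponents K
  have hmemK : ∀ a : T, ∑ i, l i • (σ a.1) i = 0 := by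
    intro a; rw [hts, htσ]; exact a.2
  set g : T → ConnectedComponents K := fun a => ConnectedComponents.mk ⟨σ a.1, hmemK a⟩
    with hgdef
  -- right inverse
  have hright : ∀ a : T, hfc.connectedComponentsLift (g a) = a := by
    intro a
    rw [hgdef]
    simp only
    rw [hfc.connectedComponentsLift_apply_coe]
    exact Subtype.ext (htσ a.1)
  -- left inverse
  have hleft : ∀ X : ConnectedComponents K, g (hfc.connectedComponentsLift X) = X := by
    intro X
    obtain ⟨x, rfl⟩ := ConnectedComponents.surjective_coe X
    rw [hfc.connectedComponentsLift_apply_coe, hgdef]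
    simp only
    rw [ConnectedComponents.coe_eq_coe]
    -- connect σ (t x) to x inside K via a connected set
    set Φ : (Fin ℓ → A) → K := fun z =>
      ⟨x.1 + (z - σ (t z)), by
        rw [hts, ht_add, ht_sub, htσ, sub_self, add_zero, ← hts]
        exact x.2⟩ with hΦdef
    have hΦc : Continuous Φ := by
      apply Continuous.subtype_mk
      exact continuous_const.add (continuous_id.sub (hσc.comp htc))
    have hconn : IsPreconnected (Set.range Φ) := by
      rw [← Set.image_univ]
      exact (IsPreconnected.image isPreconnected_univ Φ hΦc.continuousOn)
    have hx1 : (⟨σ (t x.1), hmemK (f x)⟩ : K) ∈ Set.range Φ := by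
      refine ⟨σ (t x.1) - x.1, ?_⟩
      apply Subtype.ext
      rw [hΦdef]
      simp only
      rw [ht_sub, htσ, sub_self, hσ0, sub_zero]
      abel
    have hx2 : x ∈ Set.range Φ := by
      refine ⟨0, ?_⟩
      apply Subtype.ext
      rw [hΦdef]
      simp only
      rw [ht_zero, hσ0, sub_zero, add_zero]
    exact connectedComponent_eq (hconn.subset_connectedComponent hx1 hx2)
  -- conclude
  have heq : Nat.card (ConnectedComponents K) = Nat.card T :=
    Nat.card_congr ⟨hfc.connectedComponentsLift, g, hleft, hright⟩
  rw [heq, hTdef, htors e he0]
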